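/- (Nth order operator CCM) Let H, U, and K₀', K₂', …, K_N' (indexed as K_{N−2j} for j = 0,…,[N/2]) be elements of an associative algebra with U invertible and b a central scalar. Suppose [K_{N−2j}, U] + [K_{N−2j−2}, H] = 0 for all j = 0, 1, …, [N/2], with the conventions K_{N+2} = 0 and K_{N−2j} = 0 for j > [N/2]. Then K̃ = Σ_{h=0}^{[N/2]} (−1)ʰ K_{N−2h} (U⁻¹(H+b))ʰ satisfies [K̃, U⁻¹(H+b)] = 0. -/

import Mathlib

open Finset

/-- Nth order operator CCM: given the chain [K_{N−2j},U] + [K_{N−2j−2},H] = 0 (with the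
conventions [K_N,H] = 0 at the top and K_{N−2j} = 0 for j > [N/2]), the operator
K̃ = Σ_h (−1)ʰ K_{N−2h} (U⁻¹(H+b))ʰ commutes with U⁻¹(H+b). Here K j denotes K_{N−2j}. -/
theorem stmt15 {R : Type*} [Ring R] [Algebra ℝ R] (N : ℕ) (H U Uinv : R) (K : ℕ → R) (b : ℝ)
    (hU : U * Uinv = 1) (hU' : Uinv * U = 1)
    (hzero : ∀ j, N / 2 < j → K j = 0)
    (htop : K 0 * H - H * K 0 = 0)
    (hchain : ∀ j ≤ N / 2, (K j * U - U * K j) + (K (j + 1) * H - H * K (j + 1)) = 0) :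
    (∑ h ∈ range (N / 2 + 1), (-1 : R) ^ h * (K h * (Uinv * (H + algebraMap ℝ R b)) ^ h))
        * (Uinv * (H + algebraMap ℝ R b))
      - (Uinv * (H + algebraMap ℝ R b))
        * (∑ h ∈ range (N / 2 + 1), (-1 : R) ^ h * (K h * (Uinv * (H + algebraMap ℝ R b)) ^ h))
      = 0 := by
  set b' : R := algebraMap ℝ R b with hb'
  set A : R := Uinv * (H + b') with hA
  have hcent : ∀ (h : ℕ) (x : R), x * (-1 : R) ^ h = (-1 : R) ^ h * x := by
    intro h x
    have e : ((-1 : R)) ^ h = algebraMap ℝ R ((-1 : ℝ) ^ h) := by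
      rw [map_pow, map_neg, map_one]
    rw [e, Algebra.commutes]
  have cancel : ∀ x y : R, U * x = U * y → x = y := by
    intro x y hxy
    have := congrArg (fun z => Uinv * z) hxy
    simpa [← mul_assoc, hU', one_mul] using this
  have key : ∀ h, h ≤ N / 2 →
      K h * A - A * K h
        = Uinv * ((K h * H - H * K h) + (K (h+1) * H - H * K (h+1)) * A) := by
    intro h hh
    have hc := hchain h hh
    have hbK : b' * K h = K h * b' := by rw [hb']; exact Algebra.commutes b (K h)
    apply cancel
    rw [hA]
    linear_combination (norm := noncomm_ring) (-hc) * (Uinv * (H + b'))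
      + K h * hU * (H + b') - hU * ((H + b') * K h)
      - hU * ((K h * H - H * K h) + (K (h+1) * H - H * K (h+1)) * (Uinv * (H + b'))) - hbK
  set f : ℕ → R := fun h => (-1 : R) ^ h * (Uinv * ((K h * H - H * K h) * A ^ h)) with hf
  have main : (∑ h ∈ range (N / 2 + 1), (-1 : R) ^ h * (K h * A ^ h)) * A
      - A * (∑ h ∈ range (N / 2 + 1), (-1 : R) ^ h * (K h * A ^ h))
      = ∑ h ∈ range (N / 2 + 1), (f h - f (h + 1)) := by
    rw [Finset.sum_mul, Finset.mul_sum, ← Finset.sum_sub_distrib]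
    refine Finset.sum_congr rfl fun h hh => ?_
    have hh' : h ≤ N / 2 := Nat.lt_succ_iff.mp (Finset.mem_range.mp hh)
    have k := key h hh'
    have hAA : A ^ h * A = A * A ^ h := by rw [← pow_succ]; exact pow_succ' A h
    have e1 : (-1 : R) ^ h * (K h * A ^ h) * A = (-1 : R) ^ h * ((K h * A) * A ^ h) := by
      rw [mul_assoc, mul_assoc (K h), hAA, ← mul_assoc (K h)]
    have e2 : A * ((-1 : R) ^ h * (K h * A ^ h)) = (-1 : R) ^ h * ((A * K h) * A ^ h) := by
      rw [← mul_assoc, hcent h A, mul_assoc, ← mul_assoc A]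
    rw [e1, e2, ← mul_sub, ← sub_mul, k]
    simp only [hf, pow_succ']
    noncomm_ring
  rw [main, Finset.sum_range_sub']
  have h0 : f 0 = 0 := by simp [hf, htop]
  have h1 : f (N / 2 + 1) = 0 := by
    simp [hf, hzero (N / 2 + 1) (Nat.lt_succ_self _)]
  rw [h0, h1, sub_zero]
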